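/- Let a ≥ 3 be an integer and define the sequence A by A_0 = 0, A_1 = 1, A_{n+2} = a·A_{n+1} − A_n + 1. Then for all i ≥ 1, A_{i+1}·A_{i−1} = A_i² − A_i. -/
import Mathlib

/-- Lemma `ratio`: for the sequence `A` with `A 0 = 0`, `A 1 = 1`,
`A (n+2) = a * A (n+1) - A n + 1` (with `a ≥ 3`), one has
`A (i+1) * A (i-1) = A i ^ 2 - A i` for all `i ≥ 1`. -/
theorem stmt0 (a : ℤ) (ha : 3 ≤ a) (A : ℕ → ℤ)
    (hA0 : A 0 = 0) (hA1 : A 1 = 1)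
    (hrec : ∀ n : ℕ, A (n + 2) = a * A (n + 1) - A n + 1) :
    ∀ i : ℕ, 1 ≤ i → A (i + 1) * A (i - 1) = A i ^ 2 - A i := by
  have key : ∀ k : ℕ, A (k + 2) * A k = A (k + 1) ^ 2 - A (k + 1) := by
    intro k
    induction k with
    | zero => simp [hA0, hA1, hrec 0]
    | succ n ih =>
      have h1 := hrec n
      have h2 := hrec (n + 1)
      linear_combination A (n+1) * h2 + ih - A (n+2) * h1
  intro i hi
  rcases Nat.exists_eq_add_of_le hi with ⟨k, rfl⟩
  have e : 1 + k = k + 1 := Nat.add_comm 1 k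
  rw [e]
  simpa using key k
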